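/- Let k ∈ K be an output and (σ_i)_{i∈ar(k)} victorious probabilistic trace strategies. Then the strategy Req k?(σ_i)_{i∈ar(k)} — which assigns 1 to ε and to k, assigns σ_i(s) to k.i.s, and 0 to any play starting with an output l ≠ k — is victorious. -/

import Mathlib

open scoped ENNReal Classical

/-- Active-ending plays over signature `(K, ar)`: alternating sequences of
outputs `k : K` and inputs `i : ar k`. -/
inductive APlay (K : Type) (ar : K → Type) : Type
  | nil : APlay K ar
  | cons (k : K) (i : ar k) (s : APlay K ar) : APlay K ar

variable {K : Type} {ar : K → Type}

/-- Append an output-input pair at the end of an active-ending play. -/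
def APlay.snoc : APlay K ar → (k : K) → ar k → APlay K ar
  | .nil, k, i => .cons k i .nil
  | .cons l j s, k, i => .cons l j (s.snoc k i)

/-- The number of output-input cycles in an active-ending play. -/
def APlay.len : APlay K ar → ℕ
  | .nil => 0
  | .cons _ _ s => s.len + 1

/-- A play-measure: values in `[0,1]` on passive-ending plays (an active play
followed by an output), with `σ_act t = ∑_k σ_pass (t.k)` and
`σ_act (s.k.i) = σ_pass (s.k)`. -/
structure PlayMeasure (K : Type) (ar : K → Type) where
  pass : APlay K ar → K → ℝ≥0∞
  le_one : ∀ t, (∑' k, pass t k) ≤ 1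
  consistent : ∀ s k (i : ar k), pass s k = ∑' l, pass (s.snoc k i) l

/-- The value of a play-measure on an active-ending play. -/
noncomputable def PlayMeasure.act (σ : PlayMeasure K ar) (t : APlay K ar) : ℝ≥0∞ :=
  ∑' k, σ.pass t k

/-- The weight of a play-measure. -/
noncomputable def PlayMeasure.weight (σ : PlayMeasure K ar) : ℝ≥0∞ := σ.act .nil

/-- A partial counterstrategy, given by its set of active-ending plays. -/
structure Counterstrategy (K : Type) (ar : K → Type) where
  act : Set (APlay K ar)
  nil_mem : APlay.nil ∈ act
  prefix_closed : ∀ (s : APlay K ar) (k : K) (i : ar k), s.snoc k i ∈ act → s ∈ act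
  deterministic : ∀ (s : APlay K ar) (k : K) (i j : ar k),
      s.snoc k i ∈ act → s.snoc k j ∈ act → i = j

/-- The passive-ending play `s.k` is a `ρ`-failure: it is in `ρ_pass`
and has no prescribed input. -/
def Counterstrategy.Fails (ρ : Counterstrategy K ar) (s : APlay K ar) (k : K) : Prop :=
  s ∈ ρ.act ∧ ∀ i : ar k, s.snoc k i ∉ ρ.act

/-- `P^m_ρ(σ)`: the sum of `σ_act` over the length-`m` plays in `ρ_act`. -/
noncomputable def contProb (ρ : Counterstrategy K ar) (σ : PlayMeasure K ar) (m : ℕ) : ℝ≥0∞ :=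
  ∑' s : {s : APlay K ar // s ∈ ρ.act ∧ s.len = m}, σ.act s.1

/-- The sum of `σ_pass` over the `ρ`-failures of length `m`. -/
noncomputable def failProb (ρ : Counterstrategy K ar) (σ : PlayMeasure K ar) (m : ℕ) : ℝ≥0∞ :=
  ∑' p : {p : APlay K ar × K // ρ.Fails p.1 p.2 ∧ p.1.len = m}, σ.pass p.1.1 p.1.2

/-- A play-measure is victorious when against every partial counterstrategy,
the probability of play continuing forever is zero. -/
def Victorious (σ : PlayMeasure K ar) : Prop :=
  ∀ ρ : Counterstrategy K ar, (⨅ m, contProb ρ σ m) = 0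

/-- The length-`n` prefix of an infinite play. -/
def prefixPlay (f : ℕ → Σ k : K, ar k) : ℕ → APlay K ar
  | 0 => .nil
  | n + 1 => (prefixPlay f n).snoc (f n).1 (f n).2

/-- A play-measure is well-founded when no infinite play has all its
prefixes in the support. -/
def PlayMeasure.WellFoundedPM (σ : PlayMeasure K ar) : Prop :=
  ¬ ∃ f : ℕ → Σ k : K, ar k, ∀ n, 0 < σ.pass (prefixPlay f n) (f n).1

/-- A play-measure is finitely branching when each active-ending play has
finitely many possible next outputs in the support. -/
def PlayMeasure.FinBranch (σ : PlayMeasure K ar) : Prop :=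
  ∀ t : APlay K ar, {k : K | 0 < σ.pass t k}.Finite

/-- Finitely founded: well-founded and finitely branching. -/
def PlayMeasure.FinFounded (σ : PlayMeasure K ar) : Prop :=
  σ.WellFoundedPM ∧ σ.FinBranch

/-- `f` is uniformly below `g`: there is `d > 0` with `f s + d ≤ g s` on
every passive-ending play `s` in the support of `f`. -/
def UBelow (f g : APlay K ar → K → ℝ≥0∞) : Prop :=
  ∃ d : ℝ≥0∞, 0 < d ∧ ∀ s k, 0 < f s k → f s k + d ≤ g s k

/-- Append of active plays. -/
def APlay.app : APlay K ar → APlay K ar → APlay K ar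
  | .nil, u => u
  | .cons l j s, u => .cons l j (s.app u)

lemma APlay.app_nil (t : APlay K ar) : t.app .nil = t := by
  induction t with
  | nil => rfl
  | cons l j s ih => simp [APlay.app, ih]

lemma APlay.app_cons (t : APlay K ar) (l : K) (j : ar l) (u : APlay K ar) :
    t.app (.cons l j u) = (t.snoc l j).app u := by
  induction t with
  | nil => rfl
  | cons l' j' s ih => simp [APlay.app, APlay.snoc, ih]

lemma Counterstrategy.app_mem (ρ : Counterstrategy K ar) :
    ∀ (u t : APlay K ar), t.app u ∈ ρ.act → t ∈ ρ.act := by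
  intro u
  induction u with
  | nil => intro t h; rwa [APlay.app_nil] at h
  | cons l j u' ih =>
      intro t h
      rw [APlay.app_cons] at h
      exact ρ.prefix_closed t l j (ih _ h)

lemma Counterstrategy.head_mem (ρ : Counterstrategy K ar)
    (k' : K) (i' : ar k') (s : APlay K ar)
    (h : APlay.cons k' i' s ∈ ρ.act) : APlay.cons k' i' .nil ∈ ρ.act :=
  ρ.app_mem s (.cons k' i' .nil) h

lemma act_cons_ne {k : K} {τ : PlayMeasure K ar}
    (h2 : ∀ (k' : K), k' ≠ k → ∀ (i : ar k') (s : APlay K ar) (l : K),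
      τ.pass (.cons k' i s) l = 0)
    (k' : K) (hk : k' ≠ k) (j : ar k') (s : APlay K ar) :
    τ.act (.cons k' j s) = 0 := by
  unfold PlayMeasure.act
  rw [tsum_congr fun l => h2 k' hk j s l, tsum_zero]

/-- For `k ∈ K` and victorious strategies `(σ_i)_{i ∈ ar k}`, the strategy
`Req k?(σ_i)` is victorious. -/
theorem stmt_8 {K : Type} {ar : K → Type}
    (k : K) (σ : ar k → PlayMeasure K ar)
    (hw : ∀ i, (σ i).weight = 1) (hv : ∀ i, Victorious (σ i))
    (τ : PlayMeasure K ar)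
    (h0 : ∀ l, τ.pass .nil l = if l = k then 1 else 0)
    (h1 : ∀ (i : ar k) (s : APlay K ar) (l : K),
      τ.pass (.cons k i s) l = (σ i).pass s l)
    (h2 : ∀ (k' : K), k' ≠ k → ∀ (i : ar k') (s : APlay K ar) (l : K),
      τ.pass (.cons k' i s) l = 0) :
    Victorious τ := by
  intro ρ
  refine le_antisymm ?_ zero_le
  by_cases hex : ∃ i : ar k, APlay.cons k i .nil ∈ ρ.act
  · obtain ⟨i, hi0⟩ := hex
    -- the residual counterstrategy ρ / k.i
    set ρ' : Counterstrategy K ar :=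
      { act := {s | APlay.cons k i s ∈ ρ.act}
        nil_mem := hi0
        prefix_closed := fun s l j h => ρ.prefix_closed (.cons k i s) l j h
        deterministic := fun s l j j' h h' =>
          ρ.deterministic (.cons k i s) l j j' h h' } with hρ'
    have key : ∀ m, contProb ρ τ (m + 1) = contProb ρ' (σ i) m := by
      intro m
      unfold contProb
      refine tsum_eq_tsum_of_ne_zero_bij
        (fun x => ⟨.cons k i x.1.1, x.1.2.1, by simp [APlay.len, x.1.2.2]⟩)
        ?_ ?_ ?_
      · intro x y hxy
        have : APlay.cons k i x.1.1 = APlay.cons k i y.1.1 := congrArg Subtype.val hxy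
        have hval : x.1.1 = y.1.1 := by injection this
        ext : 2
        exact hval
      · rintro ⟨s, hs, hlen⟩ hne
        replace hne : τ.act s ≠ 0 := hne
        cases s with
        | nil => simp [APlay.len] at hlen
        | cons k' j s' =>
            by_cases hkk : k' = k
            · subst hkk
              have hj : i = j :=
                (ρ.deterministic .nil k' j i (ρ.head_mem k' j s' hs) hi0).symm
              subst hj
              have hs' : s' ∈ ρ'.act := hs
              have hlen' : s'.len = m := by
                simpa [APlay.len] using hlen
              have hneg : (σ i).act s' ≠ 0 := by
                have : τ.act (.cons k' i s') = (σ i).act s' := by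
                  unfold PlayMeasure.act
                  exact tsum_congr fun l => h1 i s' l
                rwa [this] at hne
              exact ⟨⟨⟨s', hs', hlen'⟩, hneg⟩, rfl⟩
            · exact absurd (act_cons_ne h2 k' hkk j s') hne
      · rintro ⟨⟨s, hs, hlen⟩, hne⟩
        unfold PlayMeasure.act
        exact tsum_congr fun l => h1 i s l
    calc ⨅ m, contProb ρ τ m ≤ ⨅ m, contProb ρ' (σ i) m := by
          refine le_iInf fun m => ?_
          exact (iInf_le _ (m + 1)).trans_eq (key m)
      _ = 0 := hv i ρ'
  · push_neg at hex
    refine (iInf_le _ 1).trans_eq ?_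
    unfold contProb
    refine ENNReal.tsum_eq_zero.2 ?_
    rintro ⟨s, hs, hlen⟩
    cases s with
    | nil => simp [APlay.len] at hlen
    | cons k' j s' =>
        by_cases hkk : k' = k
        · subst hkk
          exact absurd (ρ.head_mem k' j s' hs) (hex j)
        · exact act_cons_ne h2 k' hkk j s'
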